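/- Let Λ be a subring of a ring Γ, and m a two-sided ideal of Λ such that Λ is m-adically complete, Λ/m^i has finite length for all i, and Γm ⊆ mΓ. Then the category C of left Γ-modules M that are finitely generated projective as Λ-modules is a Krull-Schmidt category; in particular, every indecomposable object of C has local endomorphism ring. -/

import Mathlib

variable {Λ : Type*} [Ring Λ]

/-- The `n`-th power of a (two-sided) ideal of a possibly noncommutative ring. -/
def idealPow (m : Ideal Λ) : ℕ → Ideal Λ
  | 0 => ⊤
  | n + 1 => Ideal.span {x | ∃ a ∈ m, ∃ b ∈ idealPow m n, x = a * b}

/-- `Λ` is `m`-adically complete: `Λ → lim Λ/mⁱ` is bijective. -/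
def IsAdicCompleteRing (m : Ideal Λ) : Prop :=
  (∀ x : Λ, (∀ i, x ∈ idealPow m i) → x = 0) ∧
  (∀ a : ℕ → Λ, (∀ i, a (i + 1) - a i ∈ idealPow m i) →
    ∃ x : Λ, ∀ i, x - a i ∈ idealPow m i)

/-- The restriction of scalars of a `Γ`-module along a ring homomorphism `Λ → Γ`. -/
def restrModule {Γ : Type*} [Ring Γ] (ρ : Λ →+* Γ) (M : Type*) [AddCommGroup M]
    [Module Γ M] : Module Λ M :=
  Module.compHom M ρ

namespace CCKS

section ringlemmas

variable (m : Ideal Λ)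

lemma idealPow_succ_le (i : ℕ) : idealPow m (i + 1) ≤ idealPow m i := by
  rw [idealPow]
  refine Ideal.span_le.mpr ?_
  rintro x ⟨a, ha, b, hb, rfl⟩
  exact Ideal.mul_mem_left _ a hb

lemma idealPow_mul_mem : ∀ i, ∀ a ∈ idealPow m i, ∀ r : Λ, a * r ∈ idealPow m i := by
  intro i
  induction i with
  | zero => intro a _ r; trivial
  | succ i ih =>
    intro a ha
    rw [idealPow] at ha
    induction ha using Submodule.span_induction with
    | mem x hx =>
      obtain ⟨c, hc, b, hb, rfl⟩ := hx
      intro r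
      rw [idealPow, mul_assoc]
      exact Ideal.subset_span ⟨c, hc, b * r, ih b hb r, rfl⟩
    | zero => intro r; rw [zero_mul]; exact zero_mem _
    | add x y _ _ hx hy => intro r; rw [add_mul]; exact add_mem (hx r) (hy r)
    | smul c x _ hx =>
      intro r; rw [smul_eq_mul, mul_assoc]
      exact Ideal.mul_mem_left _ _ (hx r)

lemma idealPow_succ_smul {N : Type*} [AddCommGroup N] [Module Λ N] (i : ℕ)
    (X : Submodule Λ N) : idealPow m (i + 1) • X = m • (idealPow m i • X) := by
  apply le_antisymm
  · refine Submodule.smul_le.mpr fun c hc x hx => ?_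
    rw [idealPow] at hc
    induction hc using Submodule.span_induction with
    | mem y hy =>
      obtain ⟨a, ha, b, hb, rfl⟩ := hy
      rw [mul_smul]
      exact Submodule.smul_mem_smul ha (Submodule.smul_mem_smul hb hx)
    | zero => rw [zero_smul]; exact zero_mem _
    | add y z _ _ hy hz => rw [add_smul]; exact add_mem hy hz
    | smul r y _ hy => rw [smul_eq_mul, mul_smul]; exact Submodule.smul_mem _ r hy
  · refine Submodule.smul_le.mpr fun a ha y hy => ?_
    refine Submodule.smul_induction_on hy (fun b hb x hx => ?_) (fun y z hy hz => ?_)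
    · rw [← mul_smul]
      exact Submodule.smul_mem_smul (Ideal.subset_span ⟨a, ha, b, hb, rfl⟩) hx
    · rw [smul_add]; exact add_mem hy hz

variable {Γ : Type*} [Ring Γ] (ρ : Λ →+* Γ)

lemma gammaMul
    (hGM : ∀ g : Γ, ∀ a ∈ m, g * ρ a ∈
      AddSubgroup.closure {x : Γ | ∃ b ∈ m, ∃ h : Γ, x = ρ b * h}) :
    ∀ i, ∀ a ∈ idealPow m i, ∀ g : Γ, g * ρ a ∈
      AddSubgroup.closure {x : Γ | ∃ b ∈ idealPow m i, ∃ h : Γ, x = ρ b * h} := by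
  intro i
  induction i with
  | zero =>
    intro a _ g
    exact AddSubgroup.subset_closure ⟨1, trivial, g * ρ a, by rw [map_one, one_mul]⟩
  | succ i ih =>
    intro a ha
    rw [idealPow] at ha
    induction ha using Submodule.span_induction with
    | mem x hx =>
      obtain ⟨c, hc, b, hb, rfl⟩ := hx
      intro g
      have key : ∀ u ∈ AddSubgroup.closure {x : Γ | ∃ b' ∈ m, ∃ h : Γ, x = ρ b' * h},
          u * ρ b ∈ AddSubgroup.closure
            {x : Γ | ∃ b' ∈ idealPow m (i + 1), ∃ h : Γ, x = ρ b' * h} := by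
        intro u hu
        induction hu using AddSubgroup.closure_induction with
        | mem y hy =>
          obtain ⟨c', hc', h, rfl⟩ := hy
          have key2 : ∀ v ∈ AddSubgroup.closure
              {x : Γ | ∃ d ∈ idealPow m i, ∃ h' : Γ, x = ρ d * h'},
              ρ c' * v ∈ AddSubgroup.closure
                {x : Γ | ∃ b' ∈ idealPow m (i + 1), ∃ h' : Γ, x = ρ b' * h'} := by
            intro v hv
            induction hv using AddSubgroup.closure_induction with
            | mem z hz =>
              obtain ⟨d, hd, h', rfl⟩ := hz
              refine AddSubgroup.subset_closure ⟨c' * d, ?_, h', by rw [map_mul, mul_assoc]⟩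
              rw [idealPow]
              exact Ideal.subset_span ⟨c', hc', d, hd, rfl⟩
            | zero => rw [mul_zero]; exact zero_mem _
            | add z w _ _ hz hw => rw [mul_add]; exact add_mem hz hw
            | neg z _ hz => rw [mul_neg]; exact neg_mem hz
          rw [mul_assoc]
          exact key2 _ (ih b hb h)
        | zero => rw [zero_mul]; exact zero_mem _
        | add y z _ _ hy hz => rw [add_mul]; exact add_mem hy hz
        | neg y _ hy => rw [neg_mul]; exact neg_mem hy
      rw [map_mul, ← mul_assoc]
      exact key _ (hGM g c hc)
    | zero => intro g; rw [map_zero, mul_zero]; exact zero_mem _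
    | add x y _ _ hx hy => intro g; rw [map_add, mul_add]; exact add_mem (hx g) (hy g)
    | smul r x _ hx =>
      intro g
      rw [smul_eq_mul, map_mul, ← mul_assoc]
      exact hx (g * ρ r)

end ringlemmas

end CCKS

section modcore

namespace CCKS

variable {Λ : Type*} [Ring Λ] {Γ : Type*} [Ring Γ] (ρ : Λ →+* Γ) (m : Ideal Λ)
variable {M : Type*} [AddCommGroup M] [Module Γ M] [Module Λ M]

/-- The `Λ`-submodule `mⁱM`. -/
def filtL (i : ℕ) : Submodule Λ M := idealPow m i • ⊤

variable (hGM : ∀ g : Γ, ∀ a ∈ m, g * ρ a ∈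
      AddSubgroup.closure {x : Γ | ∃ b ∈ m, ∃ h : Γ, x = ρ b * h})
variable (hc : ∀ (a : Λ) (x : M), a • x = ρ a • x)

/-- The `Γ`-submodule `mⁱM`. -/
def filt (i : ℕ) : Submodule Γ M where
  carrier := filtL (Λ := Λ) m (M := M) i
  add_mem' := fun h h' => add_mem h h'
  zero_mem' := zero_mem _
  smul_mem' := by
    intro g x hx
    refine Submodule.smul_induction_on hx (fun a ha y _ => ?_) (fun y z hy hz => ?_)
    · have h1 : g • (a • y) = (g * ρ a) • y := by rw [hc, ← mul_smul]
      rw [h1]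
      have h2 := gammaMul m ρ hGM i a ha g
      refine AddSubgroup.closure_induction ?_ ?_ ?_ ?_ h2
      · rintro u ⟨b, hb, h, rfl⟩
        rw [mul_smul, ← hc]
        exact Submodule.smul_mem_smul hb trivial
      · rw [zero_smul]; exact zero_mem _
      · intro u v _ _ hu hv; rw [add_smul]; exact add_mem hu hv
      · intro u _ hu; rw [neg_smul]; exact neg_mem hu
    · rw [smul_add]; exact add_mem hy hz

lemma mem_filt {i : ℕ} {x : M} : x ∈ filt ρ m hGM hc i ↔ x ∈ filtL (Λ := Λ) m (M := M) i :=
  Iff.rfl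

lemma filtL_zero : filtL (Λ := Λ) m (M := M) 0 = ⊤ := by
  have : idealPow m 0 = ⊤ := rfl
  rw [filtL, this, Submodule.top_smul]

lemma filtL_succ_le (i : ℕ) : filtL (Λ := Λ) m (M := M) (i + 1) ≤ filtL m i :=
  Submodule.smul_mono_left (idealPow_succ_le m i)

lemma filtL_antitone {i j : ℕ} (h : i ≤ j) :
    filtL (Λ := Λ) m (M := M) j ≤ filtL m i := by
  induction j with
  | zero => have : i = 0 := Nat.le_zero.mp h; subst this; exact le_rfl
  | succ j ih =>
    rcases Nat.lt_or_ge i (j + 1) with h' | h'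
    · exact (filtL_succ_le m j).trans (ih (Nat.lt_succ_iff.mp h'))
    · have : i = j + 1 := le_antisymm h h'
      subst this; exact le_rfl

lemma filt_succ_le (i : ℕ) : filt ρ m hGM hc (i + 1) ≤ filt ρ m hGM hc i :=
  filtL_succ_le m i

/-- Splitting of a finitely generated projective module. -/
lemma exists_split [Module.Finite Λ M] [Module.Projective Λ M] :
    ∃ (n : ℕ) (p : (Fin n → Λ) →ₗ[Λ] M) (s : M →ₗ[Λ] (Fin n → Λ)),
      p.comp s = LinearMap.id := by
  obtain ⟨n, p, hp⟩ := Module.Finite.exists_fin' Λ M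
  obtain ⟨s, hs⟩ := Module.projective_lifting_property p LinearMap.id hp
  exact ⟨n, p, s, hs⟩

lemma coord_mem {n i : ℕ} {v : Fin n → Λ}
    (hv : v ∈ (idealPow m i • (⊤ : Submodule Λ (Fin n → Λ)))) (j : Fin n) :
    v j ∈ idealPow m i := by
  refine Submodule.smul_induction_on hv (fun a ha w _ => ?_) (fun y z hy hz => ?_)
  · have : (a • w) j = a * w j := rfl
    rw [this]
    exact idealPow_mul_mem m i a ha (w j)
  · have : (y + z) j = y j + z j := rfl
    rw [this]; exact add_mem hy hz

lemma mem_smul_top_pi {n i : ℕ} {v : Fin n → Λ} (h : ∀ j, v j ∈ idealPow m i) :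
    v ∈ (idealPow m i • (⊤ : Submodule Λ (Fin n → Λ))) := by
  have hv : v = ∑ j, Pi.single j (v j) := (Finset.univ_sum_single v).symm
  rw [hv]
  refine Submodule.sum_mem _ fun j _ => ?_
  have : Pi.single j (v j) = v j • (Pi.single j (1 : Λ) : Fin n → Λ) := by
    ext k
    by_cases hk : k = j
    · subst hk; simp
    · simp [Pi.single_apply, hk]
  rw [this]
  exact Submodule.smul_mem_smul (h j) trivial

/-- Separatedness : `⋂ mⁱ M = 0`. -/
lemma filt_sep (hcomp : IsAdicCompleteRing m) [Module.Finite Λ M] [Module.Projective Λ M]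
    (x : M) (hx : ∀ i, x ∈ filtL (Λ := Λ) m (M := M) i) : x = 0 := by
  obtain ⟨n, p, s, hps⟩ := exists_split (Λ := Λ) (M := M)
  have hs : ∀ i, s x ∈ (idealPow m i • (⊤ : Submodule Λ (Fin n → Λ))) := by
    intro i
    have : (filtL (Λ := Λ) m (M := M) i).map s ≤ idealPow m i • ⊤ := by
      rw [filtL, Submodule.map_smul'']
      exact Submodule.smul_mono le_rfl le_top
    exact this (Submodule.mem_map_of_mem (hx i))
  have hzero : s x = 0 := by
    funext j
    exact hcomp.1 _ fun i => coord_mem m (hs i) j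
  have : p (s x) = x := by
    have := congrArg (fun f => f x) hps
    simpa using this
  rw [← this, hzero, map_zero]

/-- Completeness of `M` for the `m`-adic filtration. -/
lemma filt_complete (hcomp : IsAdicCompleteRing m) [Module.Finite Λ M] [Module.Projective Λ M]
    (c : ℕ → M) (hdiff : ∀ i, c (i + 1) - c i ∈ filtL (Λ := Λ) m (M := M) i) :
    ∃ x : M, ∀ i, x - c i ∈ filtL (Λ := Λ) m (M := M) i := by
  obtain ⟨n, p, s, hps⟩ := exists_split (Λ := Λ) (M := M)
  have hmap : ∀ i (y : M), y ∈ filtL (Λ := Λ) m (M := M) i →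
      s y ∈ (idealPow m i • (⊤ : Submodule Λ (Fin n → Λ))) := by
    intro i y hy
    have : (filtL (Λ := Λ) m (M := M) i).map s ≤ idealPow m i • ⊤ := by
      rw [filtL, Submodule.map_smul'']
      exact Submodule.smul_mono le_rfl le_top
    exact this (Submodule.mem_map_of_mem hy)
  have hex : ∀ j : Fin n, ∃ xj : Λ, ∀ i, xj - s (c i) j ∈ idealPow m i := by
    intro j
    refine hcomp.2 (fun i => s (c i) j) fun i => ?_
    have h1 : s (c (i + 1)) j - s (c i) j = s (c (i + 1) - c i) j := by
      rw [map_sub]; rfl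
    rw [h1]
    exact coord_mem m (hmap i _ (hdiff i)) j
  choose v hv using hex
  refine ⟨p v, fun i => ?_⟩
  have hpc : p (s (c i)) = c i := by
    have := congrArg (fun f => f (c i)) hps
    simpa using this
  have h2 : p v - c i = p (v - s (c i)) := by rw [map_sub, hpc]
  rw [h2]
  have h3 : v - s (c i) ∈ (idealPow m i • (⊤ : Submodule Λ (Fin n → Λ))) :=
    mem_smul_top_pi m fun j => hv j i
  have : (idealPow m i • (⊤ : Submodule Λ (Fin n → Λ))).map p ≤ filtL m i := by
    rw [Submodule.map_smul'', filtL]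
    exact Submodule.smul_mono le_rfl le_top
  exact this (Submodule.mem_map_of_mem h3)

end CCKS

end modcore
section transfer

namespace CCKS

variable {Λ : Type*} [Ring Λ] {Γ : Type*} [Ring Γ] (ρ : Λ →+* Γ)

section res

variable {N : Type*} [AddCommGroup N] [Module Γ N] [Module Λ N]
variable (hc : ∀ (a : Λ) (x : N), a • x = ρ a • x)

/-- View a `Γ`-submodule as a `Λ`-submodule. -/
def resSub (S : Submodule Γ N) : Submodule Λ N where
  carrier := S
  add_mem' := fun h h' => add_mem h h'
  zero_mem' := zero_mem _
  smul_mem' := fun a x hx => by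
    show a • x ∈ S
    rw [hc]
    exact S.smul_mem _ hx

lemma mem_resSub {S : Submodule Γ N} {x : N} : x ∈ resSub ρ hc S ↔ x ∈ S := Iff.rfl

/-- The order embedding of `Γ`-submodules into `Λ`-submodules. -/
def resSubEmb : Submodule Γ N ↪o Submodule Λ N where
  toFun := resSub ρ hc
  inj' := by
    intro S T h
    apply SetLike.ext'
    have h1 : (resSub ρ hc S : Set N) = S := rfl
    have h2 : (resSub ρ hc T : Set N) = T := rfl
    rw [← h1, ← h2, h]
  map_rel_iff' := Iff.rfl

lemma isNoetherian_res (hc : ∀ (a : Λ) (x : N), a • x = ρ a • x)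
    (h : IsNoetherian Λ N) : IsNoetherian Γ N := by
  have h1 : WellFoundedGT (Submodule Λ N) := isNoetherian_iff'.mp h
  have h2 : WellFoundedGT (Submodule Γ N) := (resSubEmb ρ hc).dual.wellFoundedLT
  exact isNoetherian_iff'.mpr h2

lemma isArtinian_res (hc : ∀ (a : Λ) (x : N), a • x = ρ a • x)
    (h : IsArtinian Λ N) : IsArtinian Γ N := by
  have h1 : WellFoundedLT (Submodule Λ N) := ⟨(isArtinian_iff Λ N).mp h⟩
  have h2 : WellFoundedLT (Submodule Γ N) := (resSubEmb ρ hc).wellFoundedLT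
  exact (isArtinian_iff Γ N).mpr h2.wf

/-- A `Γ`-linear map is `Λ`-linear. -/
def resLin {A B : Type*} [AddCommGroup A] [Module Γ A] [Module Λ A]
    [AddCommGroup B] [Module Γ B] [Module Λ B]
    (hcA : ∀ (a : Λ) (x : A), a • x = ρ a • x)
    (hcB : ∀ (a : Λ) (x : B), a • x = ρ a • x)
    (f : A →ₗ[Γ] B) : A →ₗ[Λ] B where
  toFun := f
  map_add' := f.map_add
  map_smul' := fun a x => by
    show f (a • x) = a • f x
    rw [hcA, hcB, f.map_smul]

end res

end CCKS

end transfer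
section quotNA

namespace CCKS

variable {Λ : Type*} [Ring Λ] {Γ : Type*} [Ring Γ] (ρ : Λ →+* Γ) (m : Ideal Λ)
variable {M : Type*} [AddCommGroup M] [Module Γ M] [Module Λ M]
variable (hGM : ∀ g : Γ, ∀ a ∈ m, g * ρ a ∈
      AddSubgroup.closure {x : Γ | ∃ b ∈ m, ∃ h : Γ, x = ρ b * h})

lemma filt_endo (hc : ∀ (a : Λ) (x : M), a • x = ρ a • x) (f : M →ₗ[Γ] M) (i : ℕ)
    {x : M} (hx : x ∈ filtL (Λ := Λ) m (M := M) i) : f x ∈ filtL (Λ := Λ) m (M := M) i := by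
  refine Submodule.smul_induction_on hx (fun a ha y _ => ?_) fun y z hy hz => ?_
  · have h1 : f (a • y) = a • f y := by rw [hc, hc, f.map_smul]
    rw [h1]; exact Submodule.smul_mem_smul ha trivial
  · rw [f.map_add]; exact add_mem hy hz

lemma quot_NA (hc : ∀ (a : Λ) (x : M), a • x = ρ a • x)
    (hF : ∀ i, IsFiniteLength Λ (Λ ⧸ idealPow m i)) [Module.Finite Λ M] (i : ℕ) :
    IsNoetherian Γ (M ⧸ filt ρ m hGM hc i) ∧ IsArtinian Γ (M ⧸ filt ρ m hGM hc i) := by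
  set Fi := filt ρ m hGM hc i with hFi
  letI instL : Module Λ (M ⧸ Fi) := restrModule ρ _
  have hcq : ∀ (a : Λ) (x : M ⧸ Fi), a • x = ρ a • x := fun _ _ => rfl
  obtain ⟨n, p, hp⟩ := Module.Finite.exists_fin' Λ M
  let mkL : M →ₗ[Λ] (M ⧸ Fi) := resLin ρ hc hcq Fi.mkQ
  have hmkL : ∀ y : M, mkL y = Submodule.Quotient.mk y := fun _ => rfl
  let g : Fin n → (Λ →ₗ[Λ] (M ⧸ Fi)) :=
    fun j => mkL ∘ₗ p ∘ₗ LinearMap.single Λ (fun _ => Λ) j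
  have hsing : ∀ (j : Fin n) (a : Λ),
      (LinearMap.single Λ (fun _ => Λ) j) a = a • (Pi.single j (1 : Λ) : Fin n → Λ) := by
    intro j a
    ext k
    by_cases hk : k = j
    · subst hk; simp
    · simp [Pi.single_apply, hk]
  have hker : ∀ j, idealPow m i ≤ LinearMap.ker (g j) := by
    intro j a ha
    have h2 : g j a = mkL (a • p (Pi.single j (1 : Λ))) := by
      simp only [g, LinearMap.comp_apply]
      rw [hsing, map_smul]
    have h3 : a • p (Pi.single j (1 : Λ)) ∈ filtL (Λ := Λ) m (M := M) i :=
      Submodule.smul_mem_smul ha trivial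
    have h4 : mkL (a • p (Pi.single j (1 : Λ))) = 0 := by
      rw [hmkL]
      exact (Submodule.Quotient.mk_eq_zero Fi).mpr h3
    show g j a = 0
    rw [h2, h4]
  let ℓ : Fin n → ((Λ ⧸ idealPow m i) →ₗ[Λ] (M ⧸ Fi)) :=
    fun j => Submodule.liftQ _ (g j) (hker j)
  let F : (Fin n → Λ ⧸ idealPow m i) →ₗ[Λ] (M ⧸ Fi) := LinearMap.lsum Λ _ ℕ ℓ
  have hFsurj : Function.Surjective F := by
    intro z
    obtain ⟨x, rfl⟩ := Submodule.Quotient.mk_surjective Fi z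
    obtain ⟨v, rfl⟩ := hp x
    refine ⟨fun j => Submodule.Quotient.mk (v j), ?_⟩
    have h1 : F (fun j => Submodule.Quotient.mk (v j))
        = ∑ j, mkL (p (LinearMap.single Λ (fun _ => Λ) j (v j))) := by
      simp only [F, LinearMap.lsum_apply, LinearMap.sum_apply, LinearMap.comp_apply,
        LinearMap.proj_apply]
      refine Finset.sum_congr rfl fun j _ => ?_
      show ℓ j (Submodule.Quotient.mk (v j)) = _
      simp only [ℓ, Submodule.liftQ_apply, g, LinearMap.comp_apply]
    rw [h1]
    have h2 : ∑ j, mkL (p (LinearMap.single Λ (fun _ => Λ) j (v j)))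
        = mkL (p (∑ j, (LinearMap.single Λ (fun _ => Λ) j (v j)))) := by
      rw [map_sum, map_sum]
    rw [h2]
    have h3 : (∑ j, (LinearMap.single Λ (fun _ => Λ) j (v j))) = v := by
      have : ∀ j, (LinearMap.single Λ (fun _ => Λ) j (v j)) = Pi.single j (v j) := fun j => rfl
      simp only [this]
      exact Finset.univ_sum_single v
    rw [h3, hmkL]
  haveI hN : IsNoetherian Λ (Λ ⧸ idealPow m i) :=
    (isFiniteLength_iff_isNoetherian_isArtinian.mp (hF i)).1
  haveI hA : IsArtinian Λ (Λ ⧸ idealPow m i) :=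
    (isFiniteLength_iff_isNoetherian_isArtinian.mp (hF i)).2
  haveI hNpi : IsNoetherian Λ (Fin n → Λ ⧸ idealPow m i) := inferInstance
  haveI hApi : IsArtinian Λ (Fin n → Λ ⧸ idealPow m i) := inferInstance
  have hNq : IsNoetherian Λ (M ⧸ Fi) :=
    isNoetherian_of_surjective F (LinearMap.range_eq_top.mpr hFsurj)
  have hAq : IsArtinian Λ (M ⧸ Fi) := isArtinian_of_surjective _ F hFsurj
  exact ⟨isNoetherian_res ρ hcq hNq, isArtinian_res ρ hcq hAq⟩

end CCKS

end quotNA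
section crux

namespace CCKS

variable {Λ : Type*} [Ring Λ] {Γ : Type*} [Ring Γ] (ρ : Λ →+* Γ) (m : Ideal Λ)
variable {M : Type*} [AddCommGroup M] [Module Γ M] [Module Λ M]
variable (hGM : ∀ g : Γ, ∀ a ∈ m, g * ρ a ∈
      AddSubgroup.closure {x : Γ | ∃ b ∈ m, ∃ h : Γ, x = ρ b * h})
variable (hc : ∀ (a : Λ) (x : M), a • x = ρ a • x)

/-- The endomorphism induced on `M/mⁱM`. -/
def fbar (f : Module.End Γ M) (i : ℕ) :
    Module.End Γ (M ⧸ filt ρ m hGM hc i) :=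
  Submodule.mapQ _ _ f (fun _ hx => filt_endo ρ m hc f i hx)

lemma fbar_mk (f : Module.End Γ M) (i : ℕ) (x : M) :
    fbar ρ m hGM hc f i (Submodule.Quotient.mk x) = Submodule.Quotient.mk (f x) :=
  Submodule.mapQ_apply _ _ _ x

lemma fbar_pow_mk (f : Module.End Γ M) (i k : ℕ) (x : M) :
    (fbar ρ m hGM hc f i ^ k) (Submodule.Quotient.mk x)
      = Submodule.Quotient.mk ((f ^ k) x) := by
  induction k generalizing x with
  | zero => rw [pow_zero, pow_zero]; rfl
  | succ k ih =>
    rw [pow_succ, pow_succ, Module.End.mul_apply, Module.End.mul_apply, fbar_mk, ih]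

lemma isUnit_of_quot_bijective (hcomp : IsAdicCompleteRing m)
    (hF : ∀ i, IsFiniteLength Λ (Λ ⧸ idealPow m i))
    [Module.Finite Λ M] [Module.Projective Λ M] (f : Module.End Γ M)
    (hbij : ∀ i, Function.Bijective (fbar ρ m hGM hc f i)) : IsUnit f := by
  rw [Module.End.isUnit_iff]
  constructor
  · intro x y hxy
    have h0 : f (x - y) = 0 := by rw [map_sub, hxy, sub_self]
    have hmem : ∀ i, x - y ∈ filtL (Λ := Λ) m (M := M) i := by
      intro i
      have h1 : fbar ρ m hGM hc f i (Submodule.Quotient.mk (x - y)) = 0 := by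
        rw [fbar_mk, h0]
        exact (Submodule.Quotient.mk_eq_zero _).mpr (zero_mem _)
      have h2 : (Submodule.Quotient.mk (x - y) : M ⧸ filt ρ m hGM hc i) = 0 :=
        (hbij i).1 (by rw [h1, map_zero])
      exact (Submodule.Quotient.mk_eq_zero _).mp h2
    exact sub_eq_zero.mp (filt_sep m hcomp _ hmem)
  · intro y
    have step : ∀ (i : ℕ) (z : M), z ∈ filtL (Λ := Λ) m (M := M) i →
        ∃ d, d ∈ filtL (Λ := Λ) m (M := M) i ∧
          z - f d ∈ filtL (Λ := Λ) m (M := M) (i + 1) := by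
      intro i z hz
      haveI hArt : IsArtinian Γ (M ⧸ filt ρ m hGM hc (i + 1)) :=
        (quot_NA ρ m hGM hc hF (i + 1)).2
      set S : Submodule Γ (M ⧸ filt ρ m hGM hc (i + 1)) :=
        (filt ρ m hGM hc i).map (filt ρ m hGM hc (i + 1)).mkQ with hS
      have hfS : ∀ x ∈ S, fbar ρ m hGM hc f (i + 1) x ∈ S := by
        rintro _ ⟨d, hd, rfl⟩
        rw [Submodule.mkQ_apply, fbar_mk]
        exact ⟨f d, filt_endo ρ m hc f i hd, rfl⟩
      let g := (fbar ρ m hGM hc f (i + 1)).restrict hfS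
      have hginj : Function.Injective g := by
        intro a b hab
        exact Subtype.ext ((hbij (i + 1)).1 (congrArg Subtype.val hab))
      have hgsurj := IsArtinian.surjective_of_injective_endomorphism g hginj
      obtain ⟨w, hw⟩ := hgsurj ⟨Submodule.Quotient.mk z, ⟨z, hz, rfl⟩⟩
      obtain ⟨d, hd, hdw⟩ := w.2
      refine ⟨d, hd, ?_⟩
      have h5 : fbar ρ m hGM hc f (i + 1) (Submodule.Quotient.mk d)
          = Submodule.Quotient.mk z := by
        have h6 := congrArg Subtype.val hw
        rw [LinearMap.restrict_apply] at h6
        rw [← Submodule.mkQ_apply, hdw]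
        exact h6
      rw [fbar_mk] at h5
      have h7 := (Submodule.Quotient.eq _).mp h5
      have := neg_mem h7
      rwa [neg_sub] at this
    let T := fun i => {x : M // y - f x ∈ filtL (Λ := Λ) m (M := M) i}
    let step' : ∀ i, T i → T (i + 1) := fun i x =>
      ⟨x.1 + (step i (y - f x.1) x.2).choose, by
        have hs := (step i (y - f x.1) x.2).choose_spec
        rw [map_add, ← sub_sub]
        exact hs.2⟩
    let c : ∀ i, T i := fun i =>
      Nat.rec ⟨0, by rw [map_zero, sub_zero, filtL_zero]; trivial⟩ step' i
    have hdiff : ∀ i, (c (i + 1)).1 - (c i).1 ∈ filtL (Λ := Λ) m (M := M) i := by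
      intro i
      have h6 : (c (i + 1)).1 = (c i).1 + (step i (y - f (c i).1) (c i).2).choose := rfl
      rw [h6, add_sub_cancel_left]
      exact (step i (y - f (c i).1) (c i).2).choose_spec.1
    obtain ⟨x, hx⟩ := filt_complete m hcomp (fun i => (c i).1) hdiff
    refine ⟨x, ?_⟩
    have h7 : ∀ i, y - f x ∈ filtL (Λ := Λ) m (M := M) i := by
      intro i
      have h8 : y - f x = (y - f (c i).1) - f (x - (c i).1) := by
        rw [map_sub]; abel
      rw [h8]
      exact sub_mem (c i).2 (filt_endo ρ m hc f i (hx i))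
    exact (sub_eq_zero.mp (filt_sep m hcomp _ h7)).symm

end CCKS

end crux
section endlocal

namespace CCKS

variable {Λ : Type*} [Ring Λ] {Γ : Type*} [Ring Γ] (ρ : Λ →+* Γ) (m : Ideal Λ)
variable {M : Type*} [AddCommGroup M] [Module Γ M] [Module Λ M]
theorem end_local
    (hGM : ∀ g : Γ, ∀ a ∈ m, g * ρ a ∈
      AddSubgroup.closure {x : Γ | ∃ b ∈ m, ∃ h : Γ, x = ρ b * h})
    (hc : ∀ (a : Λ) (x : M), a • x = ρ a • x)
    (hcomp : IsAdicCompleteRing m)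
    (hF : ∀ i, IsFiniteLength Λ (Λ ⧸ idealPow m i))
    [Module.Finite Λ M] [Module.Projective Λ M] (hnt : Nontrivial M)
    (hind : ¬ ∃ N₁ N₂ : Submodule Γ M, N₁ ≠ ⊥ ∧ N₂ ≠ ⊥ ∧ IsCompl N₁ N₂) :
    IsLocalRing (Module.End Γ M) := by
  have hEnt : Nontrivial (Module.End Γ M) := by
    obtain ⟨x, hx⟩ := exists_ne (0 : M)
    refine ⟨1, 0, fun h => hx ?_⟩
    have := congrArg (fun g : Module.End Γ M => g x) h
    simpa using this
  have key : ∀ f : Module.End Γ M, IsUnit f ∨ IsUnit (1 - f) := by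
    intro f
    haveI hNoe : ∀ i, IsNoetherian Γ (M ⧸ filt ρ m hGM hc i) :=
      fun i => (quot_NA ρ m hGM hc hF i).1
    haveI hArt : ∀ i, IsArtinian Γ (M ⧸ filt ρ m hGM hc i) :=
      fun i => (quot_NA ρ m hGM hc hF i).2
    -- stabilization of kernels and ranges
    have kerMono : ∀ i, Monotone fun k => LinearMap.ker (fbar ρ m hGM hc f i ^ k) := by
      intro i a b hab
      obtain ⟨t, rfl⟩ := Nat.exists_eq_add_of_le hab
      intro x hx
      rw [LinearMap.mem_ker] at hx ⊢
      rw [add_comm, pow_add, Module.End.mul_apply, hx, map_zero]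
    have rangeAnti : ∀ i, Antitone fun k => LinearMap.range (fbar ρ m hGM hc f i ^ k) := by
      intro i a b hab
      obtain ⟨t, rfl⟩ := Nat.exists_eq_add_of_le hab
      rintro x ⟨u, rfl⟩
      rw [pow_add, Module.End.mul_apply]
      exact ⟨_, rfl⟩
    have hstab : ∀ i, ∃ n : ℕ,
        (∀ k, n ≤ k → LinearMap.ker (fbar ρ m hGM hc f i ^ k)
            = LinearMap.ker (fbar ρ m hGM hc f i ^ n)) ∧
        (∀ k, n ≤ k → LinearMap.range (fbar ρ m hGM hc f i ^ k)
            = LinearMap.range (fbar ρ m hGM hc f i ^ n)) := by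
      intro i
      obtain ⟨n1, hn1⟩ := monotone_stabilizes_iff_noetherian.mpr (hNoe i)
        ⟨fun k => LinearMap.ker (fbar ρ m hGM hc f i ^ k), kerMono i⟩
      obtain ⟨n2, hn2⟩ := monotone_stabilizes_iff_artinian.mpr (hArt i)
        ⟨fun k => OrderDual.toDual (LinearMap.range (fbar ρ m hGM hc f i ^ k)),
          fun a b hab => rangeAnti i hab⟩
      simp only [OrderHom.coe_mk] at hn1 hn2
      refine ⟨max n1 n2, fun k hk => ?_, fun k hk => ?_⟩
      · rw [← hn1 k (le_trans (le_max_left _ _) hk), hn1 (max n1 n2) (le_max_left _ _)]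
      · have h1 := hn2 k (le_trans (le_max_right _ _) hk)
        have h2 := hn2 (max n1 n2) (le_max_right _ _)
        rw [← OrderDual.toDual_inj]
        exact h1.symm.trans h2
    choose nf hnfk hnfr using hstab
    set Nb : ℕ → ℕ := fun i => (Finset.range (i + 1)).sup nf with hNbdef
    have hNb_le : ∀ i, nf i ≤ Nb i :=
      fun i => Finset.le_sup (Finset.self_mem_range_succ i)
    have hNb_mono : Monotone Nb := fun a b hab =>
      Finset.sup_mono (Finset.range_subset_range.mpr (by omega))
    set Kq : ∀ i : ℕ, Submodule Γ (M ⧸ filt ρ m hGM hc i) :=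
      fun i => LinearMap.ker (fbar ρ m hGM hc f i ^ Nb i) with hKq
    set Iq : ∀ i : ℕ, Submodule Γ (M ⧸ filt ρ m hGM hc i) :=
      fun i => LinearMap.range (fbar ρ m hGM hc f i ^ Nb i) with hIq
    have kerstab : ∀ i k, Nb i ≤ k → LinearMap.ker (fbar ρ m hGM hc f i ^ k) = Kq i := by
      intro i k hk
      rw [hnfk i k (le_trans (hNb_le i) hk)]
      exact (hnfk i (Nb i) (hNb_le i)).symm
    have rangestab : ∀ i k, Nb i ≤ k → LinearMap.range (fbar ρ m hGM hc f i ^ k) = Iq i := by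
      intro i k hk
      rw [hnfr i k (le_trans (hNb_le i) hk)]
      exact (hnfr i (Nb i) (hNb_le i)).symm
    -- Fitting decomposition on each quotient
    have hdisj : ∀ i (u : M ⧸ filt ρ m hGM hc i), u ∈ Kq i → u ∈ Iq i → u = 0 := by
      intro i u hK hI
      obtain ⟨w, rfl⟩ := hI
      have h1 : (fbar ρ m hGM hc f i ^ Nb i) ((fbar ρ m hGM hc f i ^ Nb i) w) = 0 := hK
      have h2 : w ∈ LinearMap.ker (fbar ρ m hGM hc f i ^ (Nb i + Nb i)) := by
        rw [LinearMap.mem_ker, pow_add, Module.End.mul_apply]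
        exact h1
      rw [kerstab i _ (Nat.le_add_right _ _)] at h2
      exact h2
    have hcodisj : ∀ i (u : M ⧸ filt ρ m hGM hc i),
        ∃ k ∈ Kq i, ∃ v ∈ Iq i, k + v = u := by
      intro i u
      have h1 : (fbar ρ m hGM hc f i ^ Nb i) u ∈
          LinearMap.range (fbar ρ m hGM hc f i ^ (Nb i + Nb i)) := by
        rw [rangestab i _ (Nat.le_add_right _ _)]
        exact ⟨u, rfl⟩
      obtain ⟨w, hw⟩ := h1
      refine ⟨u - (fbar ρ m hGM hc f i ^ Nb i) w, ?_, (fbar ρ m hGM hc f i ^ Nb i) w,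
        ⟨w, rfl⟩, by abel⟩
      show _ ∈ LinearMap.ker _
      rw [LinearMap.mem_ker, map_sub]
      rw [pow_add, Module.End.mul_apply] at hw
      rw [← hw]
      exact sub_self _
    -- transition maps
    have hple : ∀ i, filt ρ m hGM hc (i + 1) ≤
        (filt ρ m hGM hc i).comap (LinearMap.id (R := Γ) (M := M)) :=
      fun i x hx => filt_succ_le ρ m hGM hc i hx
    set pmap : ∀ i : ℕ, (M ⧸ filt ρ m hGM hc (i + 1)) →ₗ[Γ] (M ⧸ filt ρ m hGM hc i) :=
      fun i => Submodule.mapQ _ _ LinearMap.id (hple i) with hpmap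
    have p_mk : ∀ i (x : M), pmap i (Submodule.Quotient.mk x) = Submodule.Quotient.mk x :=
      fun i x => Submodule.mapQ_apply _ _ _ x
    have hpK : ∀ i z, z ∈ Kq (i + 1) → pmap i z ∈ Kq i := by
      intro i z hz
      obtain ⟨x, rfl⟩ := Submodule.Quotient.mk_surjective _ z
      have h1 : (Submodule.Quotient.mk ((f ^ Nb (i + 1)) x) : M ⧸ filt ρ m hGM hc (i + 1)) = 0 := by
        rw [← fbar_pow_mk]
        exact hz
      have h2 : (f ^ Nb (i + 1)) x ∈ filt ρ m hGM hc (i + 1) :=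
        (Submodule.Quotient.mk_eq_zero _).mp h1
      have h3 : (fbar ρ m hGM hc f i ^ Nb (i + 1)) (Submodule.Quotient.mk x) = 0 := by
        rw [fbar_pow_mk]
        exact (Submodule.Quotient.mk_eq_zero _).mpr (filt_succ_le ρ m hGM hc i h2)
      rw [p_mk]
      have h4 : Submodule.Quotient.mk x ∈ LinearMap.ker (fbar ρ m hGM hc f i ^ Nb (i + 1)) := h3
      rwa [kerstab i _ (hNb_mono (Nat.le_succ i))] at h4
    have hpI : ∀ i z, z ∈ Iq (i + 1) → pmap i z ∈ Iq i := by
      intro i z hz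
      obtain ⟨u, rfl⟩ := hz
      obtain ⟨x, rfl⟩ := Submodule.Quotient.mk_surjective _ u
      rw [fbar_pow_mk, p_mk, ← fbar_pow_mk]
      have h4 : (fbar ρ m hGM hc f i ^ Nb (i + 1)) (Submodule.Quotient.mk x) ∈
          LinearMap.range (fbar ρ m hGM hc f i ^ Nb (i + 1)) := ⟨_, rfl⟩
      rwa [rangestab i _ (hNb_mono (Nat.le_succ i))] at h4
    -- global submodules
    set K : Submodule Γ M := ⨅ i, (Kq i).comap (filt ρ m hGM hc i).mkQ with hK
    set I : Submodule Γ M := ⨅ i, (Iq i).comap (filt ρ m hGM hc i).mkQ with hI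
    have memK : ∀ x : M, x ∈ K ↔ ∀ i, (Submodule.Quotient.mk x : M ⧸ filt ρ m hGM hc i) ∈ Kq i := by
      intro x
      simp [hK, Submodule.mem_iInf, Submodule.mem_comap, Submodule.mkQ_apply]
    have memI : ∀ x : M, x ∈ I ↔ ∀ i, (Submodule.Quotient.mk x : M ⧸ filt ρ m hGM hc i) ∈ Iq i := by
      intro x
      simp [hI, Submodule.mem_iInf, Submodule.mem_comap, Submodule.mkQ_apply]
    have hKIinf : K ⊓ I = ⊥ := by
      rw [eq_bot_iff]
      rintro x ⟨hxK, hxI⟩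
      have h1 : ∀ i, x ∈ filtL (Λ := Λ) m (M := M) i := by
        intro i
        have h2 := hdisj i _ ((memK x).mp hxK i) ((memI x).mp hxI i)
        exact (Submodule.Quotient.mk_eq_zero _).mp h2
      have := filt_sep m hcomp x h1
      simp [this]
    have hKIsup : K ⊔ I = ⊤ := by
      rw [eq_top_iff]
      intro x _
      have hex : ∀ i, ∃ kx : M,
          (Submodule.Quotient.mk kx : M ⧸ filt ρ m hGM hc i) ∈ Kq i ∧
          (Submodule.Quotient.mk (x - kx) : M ⧸ filt ρ m hGM hc i) ∈ Iq i := by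
        intro i
        obtain ⟨k, hk, v, hv, hkv⟩ := hcodisj i (Submodule.Quotient.mk x)
        obtain ⟨kx, rfl⟩ := Submodule.Quotient.mk_surjective _ k
        refine ⟨kx, hk, ?_⟩
        have h1 : (Submodule.Quotient.mk (x - kx) : M ⧸ filt ρ m hGM hc i) = v := by
          rw [Submodule.Quotient.mk_sub, ← hkv]
          abel
        rw [h1]; exact hv
      choose kseq hkseq using hex
      have cohK : ∀ i, (Submodule.Quotient.mk (kseq (i + 1)) : M ⧸ filt ρ m hGM hc i) ∈ Kq i := by
        intro i
        have h2 := hpK i _ (hkseq (i + 1)).1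
        rwa [p_mk] at h2
      have cohI : ∀ i,
          (Submodule.Quotient.mk (x - kseq (i + 1)) : M ⧸ filt ρ m hGM hc i) ∈ Iq i := by
        intro i
        have h2 := hpI i _ (hkseq (i + 1)).2
        rwa [p_mk] at h2
      have hdiffmem : ∀ i, kseq (i + 1) - kseq i ∈ filtL (Λ := Λ) m (M := M) i := by
        intro i
        have hKd : (Submodule.Quotient.mk (kseq (i + 1) - kseq i) :
            M ⧸ filt ρ m hGM hc i) ∈ Kq i := by
          rw [Submodule.Quotient.mk_sub]
          exact sub_mem (cohK i) (hkseq i).1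
        have hId : (Submodule.Quotient.mk (kseq (i + 1) - kseq i) :
            M ⧸ filt ρ m hGM hc i) ∈ Iq i := by
          have h9 : kseq (i + 1) - kseq i = (x - kseq i) - (x - kseq (i + 1)) := by abel
          rw [h9, Submodule.Quotient.mk_sub]
          exact sub_mem (hkseq i).2 (cohI i)
        exact (Submodule.Quotient.mk_eq_zero _).mp (hdisj i _ hKd hId)
      obtain ⟨kx, hkx⟩ := filt_complete m hcomp kseq hdiffmem
      have hkxK : kx ∈ K := by
        rw [memK]
        intro i
        have h10 : (Submodule.Quotient.mk kx : M ⧸ filt ρ m hGM hc i)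
            = Submodule.Quotient.mk (kseq i) := (Submodule.Quotient.eq _).mpr (hkx i)
        rw [h10]; exact (hkseq i).1
      have hxkxI : x - kx ∈ I := by
        rw [memI]
        intro i
        have h11 : (Submodule.Quotient.mk (x - kx) : M ⧸ filt ρ m hGM hc i)
            = Submodule.Quotient.mk (x - kseq i) := by
          refine (Submodule.Quotient.eq _).mpr ?_
          have h12 : (x - kx) - (x - kseq i) = -(kx - kseq i) := by abel
          rw [h12]
          exact neg_mem (hkx i)
        rw [h11]; exact (hkseq i).2
      exact Submodule.mem_sup.mpr ⟨kx, hkxK, x - kx, hxkxI, by abel⟩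
    -- the dichotomy
    have hcompl : IsCompl K I := ⟨disjoint_iff.mpr hKIinf, codisjoint_iff.mpr hKIsup⟩
    by_cases hKbot : K = ⊥
    · -- `f` is an isomorphism
      have hItop : I = ⊤ := by
        have h13 := hKIsup
        rwa [hKbot, bot_sup_eq] at h13
      have hIqtop : ∀ i, Iq i = ⊤ := by
        intro i
        rw [eq_top_iff]
        intro z _
        obtain ⟨x, rfl⟩ := Submodule.Quotient.mk_surjective _ z
        have h14 : x ∈ I := by rw [hItop]; trivial
        exact (memI x).mp h14 i
      left
      refine isUnit_of_quot_bijective ρ m hGM hc hcomp hF f fun i => ?_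
      have hsurj : Function.Surjective (fbar ρ m hGM hc f i) := by
        have h1 : LinearMap.range (fbar ρ m hGM hc f i ^ (Nb i + 1)) = ⊤ := by
          rw [rangestab i _ (Nat.le_succ _), hIqtop i]
        rw [← LinearMap.range_eq_top, eq_top_iff, ← h1]
        rintro z ⟨u, rfl⟩
        rw [pow_succ', Module.End.mul_apply]
        exact ⟨_, rfl⟩
      exact ⟨IsNoetherian.injective_of_surjective_endomorphism _ hsurj, hsurj⟩
    · -- `1 - f` is an isomorphism
      have hIbot : I = ⊥ := by
        by_contra hIb
        exact hind ⟨K, I, hKbot, hIb, hcompl⟩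
      have hKtop : K = ⊤ := by
        have h13 := hKIsup
        rwa [hIbot, sup_bot_eq] at h13
      have hKqtop : ∀ i, Kq i = ⊤ := by
        intro i
        rw [eq_top_iff]
        intro z _
        obtain ⟨x, rfl⟩ := Submodule.Quotient.mk_surjective _ z
        have h14 : x ∈ K := by rw [hKtop]; trivial
        exact (memK x).mp h14 i
      right
      refine isUnit_of_quot_bijective ρ m hGM hc hcomp hF (1 - f) fun i => ?_
      have hnil : IsNilpotent (fbar ρ m hGM hc f i) := by
        refine ⟨Nb i, ?_⟩
        exact LinearMap.ker_eq_top.mp (hKqtop i)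
      have hunit : IsUnit (1 - fbar ρ m hGM hc f i) := IsNilpotent.isUnit_one_sub hnil
      have hbijq : Function.Bijective ⇑(1 - fbar ρ m hGM hc f i) :=
        (Module.End.isUnit_iff _).mp hunit
      have heq : fbar ρ m hGM hc (1 - f) i = 1 - fbar ρ m hGM hc f i := by
        apply LinearMap.ext
        intro z
        obtain ⟨x, rfl⟩ := Submodule.Quotient.mk_surjective _ z
        rw [fbar_mk]
        have h15 : (1 - f) x = x - f x := rfl
        rw [h15, Submodule.Quotient.mk_sub, LinearMap.sub_apply, Module.End.one_apply, fbar_mk]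
      rw [heq]
      exact hbijq
  haveI := hEnt
  refine ⟨fun {a b} hab => ?_⟩
  rcases key a with h | h
  · exact Or.inl h
  · refine Or.inr ?_
    have hb : b = 1 - a := by rw [← hab]; abel
    rw [hb]
    exact h

end CCKS

end endlocal
section cmem

namespace CCKS

variable {Λ : Type*} [Ring Λ] {Γ : Type*} [Ring Γ] (ρ : Λ →+* Γ) (m : Ideal Λ)

/-- Membership in the category `C`. -/
def CMem (X : Type*) [AddCommGroup X] [Module Γ X] : Prop :=
  (@Module.Finite Λ X _ _ (restrModule ρ X)) ∧ (@Module.Projective Λ _ X _ (restrModule ρ X))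

variable {M : Type*} [AddCommGroup M] [Module Γ M] [Module Λ M]
variable (hc : ∀ (a : Λ) (x : M), a • x = ρ a • x)

lemma isCompl_resSub {S T : Submodule Γ M} (h : IsCompl S T) :
    IsCompl (resSub ρ hc S) (resSub ρ hc T) := by
  constructor
  · refine Submodule.disjoint_def.mpr fun x hxS hxT =>
      Submodule.disjoint_def.mp h.disjoint x hxS hxT
  · rw [codisjoint_iff, eq_top_iff]
    intro x _
    have hx : x ∈ S ⊔ T := by rw [codisjoint_iff.mp h.codisjoint]; trivial
    obtain ⟨s, hs, t, ht, rfl⟩ := Submodule.mem_sup.mp hx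
    exact Submodule.mem_sup.mpr ⟨s, hs, t, ht, rfl⟩

lemma cmem_of_isCompl (hc : ∀ (a : Λ) (x : M), a • x = ρ a • x)
    (hfin : Module.Finite Λ M) (hproj : Module.Projective Λ M)
    {S T : Submodule Γ M} (h : IsCompl S T) : CMem ρ ↥S := by
  letI iS : Module Λ ↥S := restrModule ρ ↥S
  have hcompl : IsCompl (resSub ρ hc S) (resSub ρ hc T) := isCompl_resSub ρ hc h
  let pr : M →ₗ[Λ] ↥(resSub ρ hc S) :=
    Submodule.projectionOnto (resSub ρ hc S) (resSub ρ hc T) hcompl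
  let e : ↥(resSub ρ hc S) ≃ₗ[Λ] ↥S :=
    { toFun := fun x => ⟨x.1, x.2⟩
      invFun := fun y => ⟨y.1, y.2⟩
      left_inv := fun x => rfl
      right_inv := fun y => rfl
      map_add' := fun x y => rfl
      map_smul' := fun a x => by
        apply Subtype.ext
        show a • (x.1 : M) = ((a • (⟨x.1, x.2⟩ : ↥S) : ↥S) : M)
        have h1 : ((a • (⟨x.1, x.2⟩ : ↥S) : ↥S) : M) = ρ a • x.1 := rfl
        rw [h1]; exact hc a x.1 }
  have hsurj : Function.Surjective (e.toLinearMap ∘ₗ pr) := by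
    intro y
    refine ⟨y.1, ?_⟩
    have h2 : pr y.1 = ⟨y.1, y.2⟩ := by
      have h3 := Submodule.projectionOnto_apply_left hcompl (⟨y.1, y.2⟩ : ↥(resSub ρ hc S))
      exact h3
    apply Subtype.ext
    show ((e (pr y.1)) : M) = y.1
    rw [h2]
    rfl
  haveI hfinS : Module.Finite Λ ↥S := Module.Finite.of_surjective (e.toLinearMap ∘ₗ pr) hsurj
  have hsplit : (e.toLinearMap ∘ₗ pr).comp ((resSub ρ hc S).subtype ∘ₗ e.symm.toLinearMap)
      = LinearMap.id := by
    apply LinearMap.ext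
    intro y
    have h4 : (resSub ρ hc S).subtype (e.symm y) = (e.symm y).1 := rfl
    show e (pr ((e.symm y).1)) = y
    rw [Submodule.projectionOnto_apply_left hcompl (e.symm y)]
    exact e.apply_symm_apply y
  haveI hprojS : Module.Projective Λ ↥S :=
    Module.Projective.of_split ((resSub ρ hc S).subtype ∘ₗ e.symm.toLinearMap)
      (e.toLinearMap ∘ₗ pr) hsplit
  exact ⟨hfinS, hprojS⟩

lemma eq_bot_of_le_smul (hcomp : IsAdicCompleteRing m)
    [Module.Finite Λ M] [Module.Projective Λ M]
    (X : Submodule Λ M) (hX : X ≤ idealPow m 1 • X) : X = ⊥ := by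
  have htop : idealPow m 0 = (⊤ : Ideal Λ) := rfl
  have h1 : idealPow m 1 • X = m • X := by
    have h0 : idealPow m (0 + 1) • X = m • (idealPow m 0 • X) := idealPow_succ_smul m 0 X
    rw [htop, Submodule.top_smul] at h0
    exact h0
  have h2 : ∀ i, X ≤ idealPow m i • X := by
    intro i
    induction i with
    | zero => rw [htop, Submodule.top_smul]
    | succ i ih =>
      rw [idealPow_succ_smul]
      calc X ≤ m • X := h1 ▸ hX
        _ ≤ m • (idealPow m i • X) := Submodule.smul_mono le_rfl ih
  rw [eq_bot_iff]
  intro x hx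
  have h3 : ∀ i, x ∈ filtL (Λ := Λ) m (M := M) i := fun i =>
    Submodule.smul_mono le_rfl le_top (h2 i hx)
  simpa using filt_sep m hcomp x h3

end CCKS

end cmem

section indep

namespace CCKS

lemma iSupIndep_elim {α : Type*} [CompleteLattice α] [IsModularLattice α] {ι₁ ι₂ : Type*}
    {f : ι₁ → α} {g : ι₂ → α} (hf : iSupIndep f) (hg : iSupIndep g)
    (hdisj : Disjoint (⨆ i, f i) (⨆ j, g j)) : iSupIndep (Sum.elim f g) := by
  intro s
  cases s with
  | inl i =>
    have hsup1 : (⨆ (t : ι₁ ⊕ ι₂) (_ : t ≠ Sum.inl i), Sum.elim f g t)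
        = (⨆ (i' : ι₁) (_ : i' ≠ i), f i') ⊔ ⨆ j, g j := by
      apply le_antisymm
      · refine iSup₂_le fun t ht => ?_
        cases t with
        | inl i' =>
          have hi' : i' ≠ i := fun hcon => ht (by rw [hcon])
          exact le_sup_of_le_left (le_iSup₂ (f := fun (i' : ι₁) (_ : i' ≠ i) => f i') i' hi')
        | inr j => exact le_sup_of_le_right (le_iSup g j)
      · refine sup_le (iSup₂_le fun i' hi' => ?_) (iSup_le fun j => ?_)
        · exact le_iSup₂ (f := fun (t : ι₁ ⊕ ι₂) (_ : t ≠ Sum.inl i) => Sum.elim f g t)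
            (Sum.inl i') (by simp [hi'])
        · exact le_iSup₂ (f := fun (t : ι₁ ⊕ ι₂) (_ : t ≠ Sum.inl i) => Sum.elim f g t)
            (Sum.inr j) (by simp)
    show Disjoint (f i) _
    rw [hsup1]
    refine (hf i).disjoint_sup_right_of_disjoint_sup_left ?_
    refine hdisj.mono_left ?_
    exact sup_le (le_iSup f i) (iSup₂_le fun i' _ => le_iSup f i')
  | inr j =>
    have hsup2 : (⨆ (t : ι₁ ⊕ ι₂) (_ : t ≠ Sum.inr j), Sum.elim f g t)
        = (⨆ (j' : ι₂) (_ : j' ≠ j), g j') ⊔ ⨆ i, f i := by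
      apply le_antisymm
      · refine iSup₂_le fun t ht => ?_
        cases t with
        | inl i' => exact le_sup_of_le_right (le_iSup f i')
        | inr j' =>
          have hj' : j' ≠ j := fun hcon => ht (by rw [hcon])
          exact le_sup_of_le_left (le_iSup₂ (f := fun (j' : ι₂) (_ : j' ≠ j) => g j') j' hj')
      · refine sup_le (iSup₂_le fun j' hj' => ?_) (iSup_le fun i' => ?_)
        · exact le_iSup₂ (f := fun (t : ι₁ ⊕ ι₂) (_ : t ≠ Sum.inr j) => Sum.elim f g t)
            (Sum.inr j') (by simp [hj'])
        · exact le_iSup₂ (f := fun (t : ι₁ ⊕ ι₂) (_ : t ≠ Sum.inr j) => Sum.elim f g t)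
            (Sum.inl i') (by simp)
    show Disjoint (g j) _
    rw [hsup2]
    refine (hg j).disjoint_sup_right_of_disjoint_sup_left ?_
    refine hdisj.symm.mono_left ?_
    exact sup_le (le_iSup g j) (iSup₂_le fun j' _ => le_iSup g j')

end CCKS

end indep
section decomp

namespace CCKS

variable {Λ : Type*} [Ring Λ] {Γ : Type*} [Ring Γ] (ρ : Λ →+* Γ) (m : Ideal Λ)
variable {M : Type*} [AddCommGroup M] [Module Γ M] [Module Λ M]

theorem decomp
    (hGM : ∀ g : Γ, ∀ a ∈ m, g * ρ a ∈
      AddSubgroup.closure {x : Γ | ∃ b ∈ m, ∃ h : Γ, x = ρ b * h})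
    (hc : ∀ (a : Λ) (x : M), a • x = ρ a • x)
    (hcomp : IsAdicCompleteRing m)
    (hF : ∀ i, IsFiniteLength Λ (Λ ⧸ idealPow m i))
    [Module.Finite Λ M] [Module.Projective Λ M] :
    ∃ (n : ℕ) (N : Fin n → Submodule Γ M), DirectSum.IsInternal N ∧
      ∀ i, CMem (Γ := Γ) ρ ↥(N i) ∧ IsLocalRing (Module.End Γ ↥(N i)) := by
  haveI hArt1 : IsArtinian Γ (M ⧸ filt ρ m hGM hc 1) := (quot_NA ρ m hGM hc hF 1).2
  haveI hwf : WellFoundedLT (Submodule Γ (M ⧸ filt ρ m hGM hc 1)) :=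
    ⟨(isArtinian_iff _ _).mp hArt1⟩
  set ν : Submodule Γ M → Submodule Γ (M ⧸ filt ρ m hGM hc 1) :=
    fun N => N.map (filt ρ m hGM hc 1).mkQ with hνdef
  -- strict decrease of the measure under proper decompositions
  have hlt : ∀ (N N' : Submodule Γ M), IsCompl N N' → ∀ (A B : Submodule Γ ↥N),
      IsCompl A B → B ≠ ⊥ → ν (A.map N.subtype) < ν N := by
    intro N N' hNN' A B hAB hB0
    set A' := A.map N.subtype with hA'
    set B' := B.map N.subtype with hB'
    have hsupAB : A' ⊔ B' = N := by
      rw [hA', hB', ← Submodule.map_sup, codisjoint_iff.mp hAB.codisjoint,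
        Submodule.map_subtype_top]
    have hinfAB : A' ⊓ B' = ⊥ := by
      rw [hA', hB', ← Submodule.map_inf _ (Submodule.injective_subtype N),
        disjoint_iff.mp hAB.disjoint, Submodule.map_bot]
    have hA'le : A' ≤ N := Submodule.map_subtype_le _ _
    have hB'le : B' ≤ N := Submodule.map_subtype_le _ _
    have hB'0 : B' ≠ ⊥ := by
      obtain ⟨b, hbB, hb0⟩ := B.ne_bot_iff.mp hB0
      refine (B'.ne_bot_iff).mpr ⟨(b : M), ⟨b, hbB, rfl⟩, fun hcon => hb0 ?_⟩
      exact Subtype.ext hcon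
    refine lt_of_le_of_ne (Submodule.map_mono hA'le) fun hEq => ?_
    -- complement of B' in M
    have hcomplB' : IsCompl B' (A' ⊔ N') := by
      constructor
      · refine Disjoint.disjoint_sup_right_of_disjoint_sup_left ?_ ?_
        · rw [disjoint_iff, inf_comm]
          exact hinfAB
        · rw [sup_comm, hsupAB]
          exact hNN'.disjoint
      · rw [codisjoint_iff, ← sup_assoc, sup_comm B' A', hsupAB]
        exact codisjoint_iff.mp hNN'.codisjoint
    have hcomplB'L := isCompl_resSub ρ hc hcomplB'
    set eB := Submodule.projectionOnto _ _ hcomplB'L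
    set eL : M →ₗ[Λ] M := (resSub ρ hc B').subtype ∘ₗ eB with heL
    have hrange : ∀ y : M, eL y ∈ resSub ρ hc B' := fun y => (eB y).2
    have hkey : resSub ρ hc B' ≤ idealPow m 1 • resSub ρ hc B' := by
      intro x hx
      have hxB' : x ∈ B' := hx
      have hxN : x ∈ N := hB'le hxB'
      have hmk : (filt ρ m hGM hc 1).mkQ x ∈ ν A' := by
        rw [hEq]
        exact Submodule.mem_map_of_mem hxN
      obtain ⟨a, haA', hamk⟩ := hmk
      have hxa : x - a ∈ filtL (Λ := Λ) m (M := M) 1 := by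
        have h1 : Submodule.Quotient.mk a = (Submodule.Quotient.mk x :
            M ⧸ filt ρ m hGM hc 1) := hamk
        have h2 := (Submodule.Quotient.eq _).mp h1.symm
        exact h2
      have heLa : eL a = 0 := by
        have h3 : a ∈ resSub ρ hc (A' ⊔ N') := Submodule.mem_sup_left haA'
        have h4 : eB a = 0 := Submodule.projectionOnto_apply_of_mem_right hcomplB'L h3
        rw [heL, LinearMap.comp_apply, h4, map_zero]
      have heLx : eL x = x := by
        have h5 := Submodule.projectionOnto_apply_left hcomplB'L
          (⟨x, hx⟩ : ↥(resSub ρ hc B'))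
        rw [heL, LinearMap.comp_apply]
        rw [h5]
        rfl
      have h6 : x = eL (x - a) := by
        rw [map_sub, heLa, heLx, sub_zero]
      rw [h6]
      have h7 : (filtL (Λ := Λ) m (M := M) 1).map eL ≤ idealPow m 1 • resSub ρ hc B' := by
        rw [filtL, Submodule.map_smul'']
        refine Submodule.smul_mono le_rfl ?_
        rintro y ⟨u, _, rfl⟩
        exact hrange u
      exact h7 (Submodule.mem_map_of_mem hxa)
    have hbot : resSub ρ hc B' = ⊥ := eq_bot_of_le_smul m hcomp _ hkey
    refine hB'0 ?_
    rw [eq_bot_iff]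
    intro x hx
    have : x ∈ resSub ρ hc B' := hx
    rw [hbot] at this
    exact this
  -- main well-founded induction
  have main : ∀ Qb : Submodule Γ (M ⧸ filt ρ m hGM hc 1), ∀ N N' : Submodule Γ M,
      IsCompl N N' → ν N = Qb →
      ∃ (n : ℕ) (A : Fin n → Submodule Γ M), iSupIndep A ∧ (⨆ j, A j) = N ∧
        ∀ j, CMem (Γ := Γ) ρ ↥(A j) ∧ IsLocalRing (Module.End Γ ↥(A j)) := by
    intro Q0
    refine WellFoundedLT.induction (motive := fun Qb => ∀ N N' : Submodule Γ M,
      IsCompl N N' → ν N = Qb →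
      ∃ (n : ℕ) (A : Fin n → Submodule Γ M), iSupIndep A ∧ (⨆ j, A j) = N ∧
        ∀ j, CMem (Γ := Γ) ρ ↥(A j) ∧ IsLocalRing (Module.End Γ ↥(A j))) Q0 ?_
    intro Qb IH N N' hNN' hν
    by_cases hNbot : N = ⊥
    · refine ⟨0, Fin.elim0, fun s => s.elim0, ?_, fun j => j.elim0⟩
      rw [hNbot, iSup_of_empty]
    · by_cases hdec : ∃ A B : Submodule Γ ↥N, A ≠ ⊥ ∧ B ≠ ⊥ ∧ IsCompl A B
      · obtain ⟨A, B, hA0, hB0, hAB⟩ := hdec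
        set A' := A.map N.subtype with hA'
        set B' := B.map N.subtype with hB'
        have hsupAB : A' ⊔ B' = N := by
          rw [hA', hB', ← Submodule.map_sup, codisjoint_iff.mp hAB.codisjoint,
            Submodule.map_subtype_top]
        have hinfAB : A' ⊓ B' = ⊥ := by
          rw [hA', hB', ← Submodule.map_inf _ (Submodule.injective_subtype N),
            disjoint_iff.mp hAB.disjoint, Submodule.map_bot]
        have hcomplA' : IsCompl A' (B' ⊔ N') := by
          constructor
          · refine Disjoint.disjoint_sup_right_of_disjoint_sup_left ?_ ?_
            · rw [disjoint_iff]; exact hinfAB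
            · rw [hsupAB]; exact hNN'.disjoint
          · rw [codisjoint_iff, ← sup_assoc, hsupAB]
            exact codisjoint_iff.mp hNN'.codisjoint
        have hcomplB' : IsCompl B' (A' ⊔ N') := by
          constructor
          · refine Disjoint.disjoint_sup_right_of_disjoint_sup_left ?_ ?_
            · rw [disjoint_iff, inf_comm]; exact hinfAB
            · rw [sup_comm, hsupAB]; exact hNN'.disjoint
          · rw [codisjoint_iff, ← sup_assoc, sup_comm B' A', hsupAB]
            exact codisjoint_iff.mp hNN'.codisjoint
        have hltA : ν A' < Qb := hν ▸ hlt N N' hNN' A B hAB hB0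
        have hltB : ν B' < Qb := hν ▸ hlt N N' hNN' B A hAB.symm hA0
        obtain ⟨n₁, F₁, hind₁, hsup₁, hprop₁⟩ := IH (ν A') hltA A' (B' ⊔ N') hcomplA' rfl
        obtain ⟨n₂, F₂, hind₂, hsup₂, hprop₂⟩ := IH (ν B') hltB B' (A' ⊔ N') hcomplB' rfl
        have hdisjsup : Disjoint (⨆ i, F₁ i) (⨆ j, F₂ j) := by
          rw [hsup₁, hsup₂, disjoint_iff]
          exact hinfAB
        have hElim : iSupIndep (Sum.elim F₁ F₂) := iSupIndep_elim hind₁ hind₂ hdisjsup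
        have hEqApp : ∀ j, Fin.append F₁ F₂ j = Sum.elim F₁ F₂ (finSumFinEquiv.symm j) := by
          intro j
          refine Fin.addCases (fun i => ?_) (fun i => ?_) j
          · rw [Fin.append_left, finSumFinEquiv_symm_apply_castAdd]
            rfl
          · rw [Fin.append_right, finSumFinEquiv_symm_apply_natAdd]
            rfl
        refine ⟨n₁ + n₂, Fin.append F₁ F₂, ?_, ?_, ?_⟩
        · have h8 : iSupIndep (Sum.elim F₁ F₂ ∘ ⇑finSumFinEquiv.symm) :=
            hElim.comp finSumFinEquiv.symm.injective
          have h9 : Fin.append F₁ F₂ = Sum.elim F₁ F₂ ∘ ⇑finSumFinEquiv.symm :=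
            funext hEqApp
          rw [h9]
          exact h8
        · have h10 : (⨆ j, Fin.append F₁ F₂ j)
              = ⨆ j, Sum.elim F₁ F₂ (finSumFinEquiv.symm j) := by
            exact iSup_congr hEqApp
          rw [h10, Equiv.iSup_comp (e := finSumFinEquiv.symm), iSup_sum]
          show (⨆ i, F₁ i) ⊔ (⨆ j, F₂ j) = N
          rw [hsup₁, hsup₂]
          exact hsupAB
        · intro j
          refine Fin.addCases (fun i => ?_) (fun i => ?_) j
          · rw [Fin.append_left]; exact hprop₁ i
          · rw [Fin.append_right]; exact hprop₂ i
      · haveI hntN : Nontrivial ↥N := Submodule.nontrivial_iff_ne_bot.mpr hNbot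
        have hCm : CMem (Γ := Γ) ρ ↥N :=
          cmem_of_isCompl ρ hc ‹Module.Finite Λ M› ‹Module.Projective Λ M› hNN'
        letI iN : Module Λ ↥N := restrModule ρ ↥N
        haveI : Module.Finite Λ ↥N := hCm.1
        haveI : Module.Projective Λ ↥N := hCm.2
        have hcN : ∀ (a : Λ) (x : ↥N), a • x = ρ a • x := fun _ _ => rfl
        have hloc : IsLocalRing (Module.End Γ ↥N) :=
          end_local ρ m hGM hcN hcomp hF hntN hdec
        refine ⟨1, fun _ => N, ?_, ?_, fun j => ⟨hCm, hloc⟩⟩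
        · intro s
          have h0 : (⨆ (j : Fin 1) (_ : j ≠ s), (fun _ : Fin 1 => N) j) = ⊥ := by
            refine le_bot_iff.mp (iSup₂_le fun j hj => absurd (Subsingleton.elim j s) hj)
          show Disjoint N _
          rw [h0]
          exact disjoint_bot_right
        · exact iSup_const
  obtain ⟨n, A, hind, hsup, hprop⟩ := main (ν ⊤) ⊤ ⊥ isCompl_top_bot rfl
  exact ⟨n, A, (DirectSum.isInternal_submodule_iff_iSupIndep_and_iSup_eq_top A).mpr
    ⟨hind, hsup⟩, hprop⟩

end CCKS

end decomp

/-- **Krull-Schmidt for `C_Λ^Γ`.**  Let `Λ ⊆ Γ` be rings (via an injective ring homomorphism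
`ρ`), `m` a two-sided ideal of `Λ` such that `Λ` is `m`-adically complete, `Λ/mⁱ` has finite
length for all `i` (condition (F)), and `Γm ⊆ mΓ`.  Then the category `C` of left `Γ`-modules
which are finitely generated projective over `Λ` is Krull-Schmidt: every object decomposes into
a finite internal direct sum of `Γ`-submodules (again lying in `C`) with local endomorphism
rings; in particular every indecomposable object of `C` has local endomorphism ring. -/
theorem cC_krullSchmidt {Γ : Type*} [Ring Γ] (ρ : Λ →+* Γ) (hinj : Function.Injective ρ)
    (m : Ideal Λ) (htwoSided : ∀ a ∈ m, ∀ r : Λ, a * r ∈ m)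
    (hcomplete : IsAdicCompleteRing m)
    (hF : ∀ i : ℕ, IsFiniteLength Λ (Λ ⧸ idealPow m i))
    (hGammaM : ∀ g : Γ, ∀ a ∈ m, g * ρ a ∈
      AddSubgroup.closure {x : Γ | ∃ b ∈ m, ∃ h : Γ, x = ρ b * h}) :
    (∀ (M : Type*) [AddCommGroup M] [Module Γ M],
      (@Module.Finite Λ M _ _ (restrModule ρ M) ∧ @Module.Projective Λ _ M _ (restrModule ρ M)) →
      ∃ (n : ℕ) (N : Fin n → Submodule Γ M),
        DirectSum.IsInternal N ∧
        ∀ i, (@Module.Finite Λ (N i) _ _ (restrModule ρ (N i)) ∧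
              @Module.Projective Λ _ (N i) _ (restrModule ρ (N i))) ∧
          IsLocalRing (Module.End Γ (N i))) ∧
    (∀ (M : Type*) [AddCommGroup M] [Module Γ M],
      (@Module.Finite Λ M _ _ (restrModule ρ M) ∧ @Module.Projective Λ _ M _ (restrModule ρ M)) →
      Nontrivial M →
      (¬ ∃ N₁ N₂ : Submodule Γ M, N₁ ≠ ⊥ ∧ N₂ ≠ ⊥ ∧ IsCompl N₁ N₂) →
      IsLocalRing (Module.End Γ M)) := by
  constructor
  · intro M _ _ hCM
    letI := restrModule ρ M
    haveI : Module.Finite Λ M := hCM.1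
    haveI : Module.Projective Λ M := hCM.2
    have hc : ∀ (a : Λ) (x : M), a • x = ρ a • x := fun _ _ => rfl
    obtain ⟨n, N, hint, hprop⟩ := CCKS.decomp ρ m hGammaM hc hcomplete hF
    exact ⟨n, N, hint, fun i => ⟨⟨(hprop i).1.1, (hprop i).1.2⟩, (hprop i).2⟩⟩
  · intro M _ _ hCM hnt hind
    letI := restrModule ρ M
    haveI : Module.Finite Λ M := hCM.1
    haveI : Module.Projective Λ M := hCM.2
    exact CCKS.end_local ρ m hGammaM (fun _ _ => rfl) hcomplete hF hnt hind
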